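/- Let n ≥ 2 and let 0 < ε < n/(27(n−1)). Then the evolution function F of the ε-Go-To-The-Average protocol is locally invertible: for every configuration z ∈ (ℝ²)ⁿ there exist an open set U ⊆ (ℝ²)ⁿ containing z and an open set V ⊆ (ℝ²)ⁿ containing F(z) such that F restricted to U is a bijection from U onto V. -/

import Mathlib

noncomputable section

/-- The Euclidean plane ℝ². -/
abbrev Plane := EuclideanSpace ℝ (Fin 2)

/-- The bump function `b(X) = exp(−X²/(1−X²))` for `X < 1` and `b(X) = 0` for `X ≥ 1`. -/
def bump (X : ℝ) : ℝ :=
  if X < 1 then Real.exp (-(X ^ 2) / (1 - X ^ 2)) else 0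

/-- The evolution function of the ε-Go-To-The-Average protocol:
`F(z)_i = z_i + (ε/n) · Σ_j b(‖z_i − z_j‖²) · (z_j − z_i)`. -/
def goToTheAverage (n : ℕ) (ε : ℝ) (z : Fin n → Plane) : Fin n → Plane :=
  fun i => z i + (ε / n) • ∑ j, bump (‖z i - z j‖ ^ 2) • (z j - z i)

lemma aux1 (u : ℝ) : u * Real.exp (-u) ≤ (Real.exp 1)⁻¹ := by
  have h : u ≤ Real.exp (u - 1) := by linarith [Real.add_one_le_exp (u - 1)]
  have h2 : Real.exp (u - 1) * Real.exp (-u) = (Real.exp 1)⁻¹ := by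
    rw [← Real.exp_add, ← Real.exp_neg]; ring_nf
  calc u * Real.exp (-u) ≤ Real.exp (u - 1) * Real.exp (-u) :=
        mul_le_mul_of_nonneg_right h (Real.exp_pos _).le
    _ = (Real.exp 1)⁻¹ := h2

/-- `e * exp(-1/t) ≤ t` for `t > 0`. -/
lemma aux1' (t : ℝ) (ht : 0 < t) : Real.exp 1 * Real.exp (-t⁻¹) ≤ t := by
  have h := aux1 t⁻¹
  have ht' : t ≠ 0 := ht.ne'
  have he : (0:ℝ) < Real.exp 1 := Real.exp_pos 1
  have := mul_le_mul_of_nonneg_right h (by positivity : (0:ℝ) ≤ Real.exp 1 * t)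
  have he' : (Real.exp 1)⁻¹ * (Real.exp 1 * t) = t := by field_simp
  have ht2 : t⁻¹ * Real.exp (-t⁻¹) * (Real.exp 1 * t) = Real.exp 1 * Real.exp (-t⁻¹) := by
    field_simp
  linarith [this, he'.le, ht2.le]

/-- `e² * exp(-1/t) ≤ 4 t²` for `t > 0`. -/
lemma aux2' (t : ℝ) (ht : 0 < t) : Real.exp 1 ^ 2 * Real.exp (-t⁻¹) ≤ 4 * t ^ 2 := by
  have h := aux1' (2 * t) (by positivity)
  have hsq : Real.exp (-(2*t)⁻¹) * Real.exp (-(2*t)⁻¹) = Real.exp (-t⁻¹) := by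
    rw [← Real.exp_add]
    congr 1
    field_simp
    ring
  have h0 : 0 ≤ Real.exp 1 * Real.exp (-(2*t)⁻¹) := by positivity
  nlinarith [mul_self_le_mul_self h0 h]

lemma glue_mono : Monotone expNegInvGlue := by
  intro a b hab
  rcases le_or_gt a 0 with ha | ha
  · rw [expNegInvGlue.zero_of_nonpos ha]; exact expNegInvGlue.nonneg b
  · have hb : 0 < b := lt_of_lt_of_le ha hab
    rw [expNegInvGlue, expNegInvGlue, if_neg (not_le.2 ha), if_neg (not_le.2 hb)]
    apply Real.exp_le_exp.2
    have := one_div_le_one_div_of_le ha hab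
    simp only [one_div] at this
    linarith

lemma glue_lip (a b : ℝ) (hab : a ≤ b) :
    Real.exp 1 ^ 2 * (expNegInvGlue b - expNegInvGlue a) ≤ 8 * (b - a) := by
  have he : (0:ℝ) < Real.exp 1 := Real.exp_pos 1
  have he2 : (2.7182818283 : ℝ) < Real.exp 1 := Real.exp_one_gt_d9
  have he3 : Real.exp 1 < 2.7182818286 := Real.exp_one_lt_d9
  rcases le_or_gt b 0 with hb | hb
  · rw [expNegInvGlue.zero_of_nonpos hb, expNegInvGlue.zero_of_nonpos (hab.trans hb)]
    nlinarith
  · have hgb : expNegInvGlue b = Real.exp (-b⁻¹) := by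
      rw [expNegInvGlue, if_neg (not_le.2 hb)]
    have hXb : 0 < Real.exp (-b⁻¹) := Real.exp_pos _
    rcases le_or_gt a 0 with ha | ha
    · rw [expNegInvGlue.zero_of_nonpos ha, hgb]
      -- e² exp(-1/b) ≤ e b ≤ 8 b ≤ 8 (b-a)
      have h1 := aux1' b hb
      nlinarith [mul_le_mul_of_nonneg_left h1 he.le]
    · have hga : expNegInvGlue a = Real.exp (-a⁻¹) := by
        rw [expNegInvGlue, if_neg (not_le.2 ha)]
      rw [hgb, hga]
      have hXa : 0 < Real.exp (-a⁻¹) := Real.exp_pos _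
      have hab2 : 0 < a * b := by positivity
      have key : Real.exp (-b⁻¹) - Real.exp (-a⁻¹) ≤ Real.exp (-b⁻¹) * (a⁻¹ - b⁻¹) := by
        have h := Real.add_one_le_exp (b⁻¹ - a⁻¹)
        have hmul : Real.exp (-a⁻¹) = Real.exp (-b⁻¹) * Real.exp (b⁻¹ - a⁻¹) := by
          rw [← Real.exp_add]; ring_nf
        nlinarith
      have e1 : a * b * (Real.exp (-b⁻¹) * (a⁻¹ - b⁻¹)) = Real.exp (-b⁻¹) * (b - a) := by
        field_simp
      have key' : a * b * (Real.exp (-b⁻¹) - Real.exp (-a⁻¹)) ≤ Real.exp (-b⁻¹) * (b - a) := by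
        calc a * b * (Real.exp (-b⁻¹) - Real.exp (-a⁻¹))
            ≤ a * b * (Real.exp (-b⁻¹) * (a⁻¹ - b⁻¹)) := mul_le_mul_of_nonneg_left key hab2.le
          _ = Real.exp (-b⁻¹) * (b - a) := e1
      have hba' : (0:ℝ) ≤ b - a := by linarith
      rcases le_or_gt b (2 * a) with hcase | hcase
      · -- b ≤ 2a
        have k1 : a * b * (Real.exp 1 ^ 2 * (Real.exp (-b⁻¹) - Real.exp (-a⁻¹)))
            ≤ Real.exp 1 ^ 2 * (Real.exp (-b⁻¹) * (b - a)) := by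
          nlinarith [mul_le_mul_of_nonneg_left key' (by positivity : (0:ℝ) ≤ Real.exp 1 ^ 2)]
        have k2 : Real.exp 1 ^ 2 * (Real.exp (-b⁻¹) * (b - a)) ≤ 4 * b ^ 2 * (b - a) := by
          nlinarith [mul_le_mul_of_nonneg_right (aux2' b hb) hba']
        have k3 : 4 * b ^ 2 * (b - a) ≤ a * b * (8 * (b - a)) := by
          nlinarith [mul_nonneg (mul_nonneg (sub_nonneg.2 hcase) hb.le) hba']
        have k4 : a * b * (Real.exp 1 ^ 2 * (Real.exp (-b⁻¹) - Real.exp (-a⁻¹)))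
            ≤ a * b * (8 * (b - a)) := by linarith
        exact le_of_mul_le_mul_left k4 hab2
      · -- 2a < b
        have h1 := aux1' b hb
        nlinarith [mul_le_mul_of_nonneg_left h1 he.le]

lemma bump_nonneg (X : ℝ) : 0 ≤ bump X := by
  rw [bump]; split
  · exact (Real.exp_pos _).le
  · exact le_refl 0

lemma bump_zero_of_one_le {X : ℝ} (hX : 1 ≤ X) : bump X = 0 := by
  rw [bump, if_neg (not_lt.2 hX)]

lemma bump_le_one {X : ℝ} (hX : 0 ≤ X) : bump X ≤ 1 := by
  rw [bump]; split
  · rename_i h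
    rw [Real.exp_le_one_iff]
    have h1 : 0 < 1 - X ^ 2 := by nlinarith
    apply div_nonpos_of_nonpos_of_nonneg <;> nlinarith
  · norm_num

lemma bump_eq_glue {X : ℝ} (hX : 0 ≤ X) :
    bump X = Real.exp 1 * expNegInvGlue (1 - X ^ 2) := by
  rw [bump]; split
  · rename_i h
    have h1 : 0 < 1 - X ^ 2 := by nlinarith
    rw [expNegInvGlue, if_neg (not_le.2 h1), ← Real.exp_add]
    congr 1
    field_simp
    ring
  · rename_i h
    push_neg at h
    rw [expNegInvGlue.zero_of_nonpos (by nlinarith), mul_zero]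

set_option maxHeartbeats 1600000 in
/-- The pointwise Lipschitz estimate for `v ↦ bump(‖v‖²) • v`. -/
lemma hlip (v w : Plane) :
    ‖bump (‖v‖ ^ 2) • v - bump (‖w‖ ^ 2) • w‖ ≤ 27 / 2 * ‖v - w‖ := by
  wlog hvw : ‖w‖ ≤ ‖v‖ with H
  · calc ‖bump (‖v‖ ^ 2) • v - bump (‖w‖ ^ 2) • w‖
        = ‖bump (‖w‖ ^ 2) • w - bump (‖v‖ ^ 2) • v‖ := (norm_sub_rev _ _)
      _ ≤ 27 / 2 * ‖w - v‖ := H w v (le_of_not_ge hvw)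
      _ = 27 / 2 * ‖v - w‖ := by rw [norm_sub_rev]
  have hw0 : (0:ℝ) ≤ ‖w‖ := norm_nonneg w
  have hv0 : (0:ℝ) ≤ ‖v‖ := norm_nonneg v
  have hN0 : (0:ℝ) ≤ ‖v - w‖ := norm_nonneg (v - w)
  rcases le_or_gt 1 ‖w‖ with hw1 | hw1
  · rw [bump_zero_of_one_le (by nlinarith), bump_zero_of_one_le (by nlinarith)]
    simp
  · set m : ℝ := min ‖v‖ 1 with hm
    have hm0 : 0 ≤ m := le_min hv0 zero_le_one
    have hm1 : m ≤ 1 := min_le_right _ _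
    have hwm : ‖w‖ ≤ m := le_min hvw hw1.le
    have hmv : m ≤ ‖v‖ := min_le_left _ _
    have hbv : bump (‖v‖ ^ 2) = bump (m ^ 2) := by
      rcases le_total ‖v‖ 1 with h | h
      · have : m = ‖v‖ := min_eq_left h
        rw [this]
      · have : m = 1 := min_eq_right h
        rw [this, bump_zero_of_one_le (by nlinarith), bump_zero_of_one_le (by norm_num)]
    have hdec : bump (‖v‖ ^ 2) • v - bump (‖w‖ ^ 2) • w
        = bump (‖v‖ ^ 2) • (v - w) + (bump (‖v‖ ^ 2) - bump (‖w‖ ^ 2)) • w := by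
      rw [smul_sub, sub_smul]; abel
    rw [hdec]
    have h1 : ‖bump (‖v‖ ^ 2) • (v - w)‖ ≤ ‖v - w‖ := by
      rw [norm_smul, Real.norm_eq_abs, abs_of_nonneg (bump_nonneg _)]
      have := bump_le_one (X := ‖v‖ ^ 2) (by positivity)
      nlinarith
    -- second term
    have hsq : ‖w‖ ^ 2 ≤ m ^ 2 := by nlinarith
    have hsq4 : (‖w‖ ^ 2) ^ 2 ≤ (m ^ 2) ^ 2 := by nlinarith [sq_nonneg ‖w‖, sq_nonneg m]
    have harg : 1 - (m ^ 2) ^ 2 ≤ 1 - (‖w‖ ^ 2) ^ 2 := by linarith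
    have he : (0:ℝ) < Real.exp 1 := Real.exp_pos 1
    have he2 : (2.7182818283 : ℝ) < Real.exp 1 := Real.exp_one_gt_d9
    set g1 : ℝ := expNegInvGlue (1 - (‖w‖ ^ 2) ^ 2) with hg1
    set g2 : ℝ := expNegInvGlue (1 - (m ^ 2) ^ 2) with hg2
    have hgd : 0 ≤ g1 - g2 := by
      have := glue_mono harg
      rw [← hg1, ← hg2] at this
      linarith
    have hmono : bump (‖v‖ ^ 2) ≤ bump (‖w‖ ^ 2) := by
      rw [hbv, bump_eq_glue (by positivity : (0:ℝ) ≤ m ^ 2),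
        bump_eq_glue (by positivity : (0:ℝ) ≤ ‖w‖ ^ 2), ← hg1, ← hg2]
      nlinarith
    have hd : bump (‖w‖ ^ 2) - bump (‖v‖ ^ 2) = Real.exp 1 * (g1 - g2) := by
      rw [hbv, bump_eq_glue (by positivity : (0:ℝ) ≤ m ^ 2),
        bump_eq_glue (by positivity : (0:ℝ) ≤ ‖w‖ ^ 2), ← hg1, ← hg2]
      ring
    have hgl := glue_lip (1 - (m ^ 2) ^ 2) (1 - (‖w‖ ^ 2) ^ 2) harg
    rw [← hg1, ← hg2] at hgl
    have h4 : m - ‖w‖ ≤ ‖v - w‖ :=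
      le_trans (by linarith [norm_sub_norm_le v w]) (norm_sub_norm_le v w)
    clear_value g1 g2 m
    have hdd : (m ^ 2) ^ 2 - (‖w‖ ^ 2) ^ 2 ≤ 4 * ‖v - w‖ := by
      have e1 : (m ^ 2) ^ 2 - (‖w‖ ^ 2) ^ 2 = (m ^ 2 + ‖w‖ ^ 2) * (m + ‖w‖) * (m - ‖w‖) := by
        ring
      have b3 : 0 ≤ m - ‖w‖ := by linarith
      have c1 : (m ^ 2 + ‖w‖ ^ 2) * (m + ‖w‖) ≤ 4 := by nlinarith
      have c0 : 0 ≤ (m ^ 2 + ‖w‖ ^ 2) * (m + ‖w‖) := by positivity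
      rw [e1]
      nlinarith [mul_le_mul_of_nonneg_right c1 b3]
    have hb1 : Real.exp 1 ^ 2 * (g1 - g2) ≤ 32 * ‖v - w‖ := by linarith
    have s2 : Real.exp 1 * (Real.exp 1 * (g1 - g2)) ≤ 32 * ‖v - w‖ := by
      have : Real.exp 1 * (Real.exp 1 * (g1 - g2)) = Real.exp 1 ^ 2 * (g1 - g2) := by ring
      linarith
    have s3 : Real.exp 1 * (g1 - g2) ≤ 25 / 2 * ‖v - w‖ := by
      nlinarith [mul_nonneg he.le hgd, s2, he2, hN0]
    have h2 : ‖(bump (‖v‖ ^ 2) - bump (‖w‖ ^ 2)) • w‖ ≤ 25 / 2 * ‖v - w‖ := by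
      rw [norm_smul, Real.norm_eq_abs, abs_of_nonpos (by linarith), neg_sub, hd]
      nlinarith [mul_nonneg he.le hgd, s3, hw0, hw1.le]
    calc ‖bump (‖v‖ ^ 2) • (v - w) + (bump (‖v‖ ^ 2) - bump (‖w‖ ^ 2)) • w‖
        ≤ ‖bump (‖v‖ ^ 2) • (v - w)‖ + ‖(bump (‖v‖ ^ 2) - bump (‖w‖ ^ 2)) • w‖ := norm_add_le _ _
      _ ≤ 27 / 2 * ‖v - w‖ := by linarith

theorem goToTheAverage_locally_invertible
    (n : ℕ) (hn : 2 ≤ n) (ε : ℝ) (hε : 0 < ε) (hε' : ε < (n : ℝ) / (27 * ((n : ℝ) - 1))) :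
    ∀ z : Fin n → Plane, ∃ U V : Set (Fin n → Plane),
      IsOpen U ∧ IsOpen V ∧ z ∈ U ∧ goToTheAverage n ε z ∈ V ∧
        Set.BijOn (goToTheAverage n ε) U V := by
  intro z
  have hn1 : (1:ℝ) ≤ (n:ℝ) - 1 := by
    have : (2:ℝ) ≤ (n:ℝ) := by exact_mod_cast hn
    linarith
  have hnpos : (0:ℝ) < (n:ℝ) := by linarith
  have hden : (0:ℝ) < 27 * ((n:ℝ) - 1) := by linarith
  set C : ℝ := 27 * ((n:ℝ) - 1) * ε / n with hC
  have hC0 : 0 ≤ C := by positivity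
  have hC1 : C < 1 := by
    rw [hC, div_lt_one hnpos]
    have := (lt_div_iff₀' hden).1 hε'
    linarith
  -- the approximation estimate
  have happrox : ApproximatesLinearOn (goToTheAverage n ε)
      (ContinuousLinearMap.id ℝ (Fin n → Plane)) Set.univ C.toNNReal := by
    intro x _ y _
    rw [Real.coe_toNNReal _ hC0]
    have key : ∀ i, ‖(goToTheAverage n ε x - goToTheAverage n ε y
        - ContinuousLinearMap.id ℝ (Fin n → Plane) (x - y)) i‖ ≤ C * ‖x - y‖ := by
      intro i
      have hrw : (goToTheAverage n ε x - goToTheAverage n ε y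
          - ContinuousLinearMap.id ℝ (Fin n → Plane) (x - y)) i
          = (ε / n) • ∑ j, (bump (‖x j - x i‖ ^ 2) • (x j - x i)
              - bump (‖y j - y i‖ ^ 2) • (y j - y i)) := by
        simp only [ContinuousLinearMap.id_apply, Pi.sub_apply, goToTheAverage]
        rw [Finset.sum_sub_distrib, smul_sub]
        have e1 : ∀ j, bump (‖x i - x j‖ ^ 2) = bump (‖x j - x i‖ ^ 2) := by
          intro j; rw [norm_sub_rev]
        have e2 : ∀ j, bump (‖y i - y j‖ ^ 2) = bump (‖y j - y i‖ ^ 2) := by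
          intro j; rw [norm_sub_rev]
        simp only [e1, e2]
        abel
      rw [hrw]
      have hbound : ∀ j, ‖bump (‖x j - x i‖ ^ 2) • (x j - x i)
          - bump (‖y j - y i‖ ^ 2) • (y j - y i)‖ ≤ if j = i then 0 else 27 * ‖x - y‖ := by
        intro j
        by_cases hj : j = i
        · simp [hj, bump]
        · rw [if_neg hj]
          calc ‖bump (‖x j - x i‖ ^ 2) • (x j - x i) - bump (‖y j - y i‖ ^ 2) • (y j - y i)‖
              ≤ 27 / 2 * ‖(x j - x i) - (y j - y i)‖ := hlip _ _
            _ ≤ 27 * ‖x - y‖ := by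
                have t1 : ‖(x j - x i) - (y j - y i)‖ ≤ ‖x j - y j‖ + ‖x i - y i‖ := by
                  calc ‖(x j - x i) - (y j - y i)‖ = ‖(x j - y j) - (x i - y i)‖ := by
                        congr 1; abel
                    _ ≤ ‖x j - y j‖ + ‖x i - y i‖ := norm_sub_le _ _
                have t2 : ‖x j - y j‖ ≤ ‖x - y‖ := by
                  have := norm_le_pi_norm (x - y) j
                  simpa using this
                have t3 : ‖x i - y i‖ ≤ ‖x - y‖ := by
                  have := norm_le_pi_norm (x - y) i
                  simpa using this
                linarith
      calc ‖(ε / n) • ∑ j, (bump (‖x j - x i‖ ^ 2) • (x j - x i)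
              - bump (‖y j - y i‖ ^ 2) • (y j - y i))‖
          = (ε / n) * ‖∑ j, (bump (‖x j - x i‖ ^ 2) • (x j - x i)
              - bump (‖y j - y i‖ ^ 2) • (y j - y i))‖ := by
            rw [norm_smul, Real.norm_eq_abs, abs_of_nonneg (by positivity)]
        _ ≤ (ε / n) * ∑ j, (if j = i then (0:ℝ) else 27 * ‖x - y‖) := by
            apply mul_le_mul_of_nonneg_left _ (by positivity)
            exact le_trans (norm_sum_le _ _) (Finset.sum_le_sum fun j _ => hbound j)
        _ = (ε / n) * (((n:ℝ) - 1) * (27 * ‖x - y‖)) := by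
            congr 1
            have h0 : (if i = i then (0:ℝ) else 27 * ‖x - y‖) = 0 := by simp
            rw [← Finset.sum_erase (f := fun j => if j = i then (0:ℝ) else 27 * ‖x - y‖) Finset.univ h0,
              Finset.sum_congr rfl (fun j hj => if_neg (Finset.ne_of_mem_erase hj)),
              Finset.sum_const, Finset.card_erase_of_mem (Finset.mem_univ i),
              Finset.card_univ, Fintype.card_fin, nsmul_eq_mul]
            have hcast : ((n - 1 : ℕ) : ℝ) = (n:ℝ) - 1 := by
              have h1 : 1 ≤ n := by omega
              push_cast [Nat.cast_sub h1]
              ring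
            rw [hcast]
        _ = C * ‖x - y‖ := by
            rw [hC]
            field_simp
    exact (pi_norm_le_iff_of_nonneg (by positivity)).2 key
  -- build the partial homeomorphism
  haveI : Nonempty (Fin n) := ⟨⟨0, by omega⟩⟩
  haveI : Nontrivial (Fin n → Plane) := by infer_instance
  have hC1' : C.toNNReal < 1 := by
    have h : (C.toNNReal : ℝ) < ((1 : NNReal) : ℝ) := by
      rw [Real.coe_toNNReal _ hC0]
      simpa using hC1
    exact_mod_cast h
  have happrox' : ApproximatesLinearOn (goToTheAverage n ε)
      ((ContinuousLinearEquiv.refl ℝ (Fin n → Plane) : (Fin n → Plane) ≃L[ℝ] (Fin n → Plane)) :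
        (Fin n → Plane) →L[ℝ] (Fin n → Plane)) Set.univ C.toNNReal := by
    rwa [ContinuousLinearEquiv.coe_refl]
  have hcN : Subsingleton (Fin n → Plane) ∨ C.toNNReal <
      ‖(((ContinuousLinearEquiv.refl ℝ (Fin n → Plane)).symm :
        (Fin n → Plane) ≃L[ℝ] (Fin n → Plane)) : (Fin n → Plane) →L[ℝ] (Fin n → Plane))‖₊⁻¹ := by
    right
    rw [ContinuousLinearEquiv.refl_symm, ContinuousLinearEquiv.coe_refl,
      ContinuousLinearMap.nnnorm_id]
    simpa using hC1'
  set e := happrox'.toOpenPartialHomeomorph (goToTheAverage n ε) Set.univ hcN isOpen_univ with he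
  refine ⟨Set.univ, e.target, isOpen_univ, e.open_target, Set.mem_univ z, ?_, ?_⟩
  · exact e.map_source (by simp [he])
  · have hb := e.toPartialEquiv.bijOn
    have hsrc : e.source = Set.univ := rfl
    rw [hsrc] at hb
    exact hb
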